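/- Let ε ≥ 0, p ∈ (0,1), and 1 ≤ k ≤ n. Let D be the product distribution on {0,1}^n in which each coordinate independently equals 1 with probability p, and let RR be the randomized-response selection mechanism with flip probability 1/(1+e^ε). For X ~ D and I = RR(X), let Z = (1/k)·Σ_{j ∈ I} 1[X_j = 1]. Then E[Z] ≥ (1 − k·n^k·exp((k−n)·(1−p+p·e^ε)/(1+e^ε))) · (p·e^ε)/(1−p+p·e^ε), where the expectation is over X and the internal randomness of RR. -/

import Mathlib

open MeasureTheory

/-- The probability that a sample from the PMF `μ` lands in the set `T`. -/
noncomputable def prob {α : Type*} (μ : PMF α) (T : Set α) : ℝ :=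
  (μ.toOuterMeasure T).toReal

/-- Probability of the string `x` under the product Bernoulli(p) distribution. -/
noncomputable def weight {n : ℕ} (p : ℝ) (x : Fin n → Bool) : ℝ :=
  ∏ i, if x i then p else 1 - p

/-- The distribution of `n` i.i.d. samples from `μ`. -/
noncomputable def pmfPi {α : Type*} : (n : ℕ) → PMF α → PMF (Fin n → α)
  | 0, _ => PMF.pure (fun i => i.elim0)
  | n+1, μ => μ.bind fun b => (pmfPi n μ).bind fun g => PMF.pure (Fin.cons b g)

/-- Bernoulli distribution on `Bool` with success probability `1/(1+e^ε)`
(the flip probability of randomized response). -/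
noncomputable def flipPMF (ε : ℝ) : PMF Bool :=
  PMF.bernoulli (Real.toNNReal (1 / (1 + Real.exp ε)))
    (by
      rw [Real.toNNReal_le_one, div_le_one (by positivity)]
      nlinarith [Real.exp_pos ε])

/-- Given the flipped string `y`, output the selected set: if
`S = {i : y i = 1}` has at least `k` elements, a uniformly random `k`-subset of
`S`; otherwise `S` together with a uniformly random `(k−|S|)`-subset of its
complement.  (The selected indices are "ordered arbitrarily", so the output is
modeled as the set of `k` selected indices.) -/
noncomputable def rrSelect (n k : ℕ) (hk : k ≤ n) (y : Fin n → Bool) :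
    PMF (Finset (Fin n)) :=
  if h : k ≤ (Finset.univ.filter fun i => y i = true).card then
    PMF.uniformOfFinset ((Finset.univ.filter fun i => y i = true).powersetCard k)
      (Finset.powersetCard_nonempty.2 h)
  else
    (PMF.uniformOfFinset
        ((Finset.univ.filter fun i => y i = true)ᶜ.powersetCard
          (k - (Finset.univ.filter fun i => y i = true).card))
        (Finset.powersetCard_nonempty.2 (by
          rw [Finset.card_compl, Fintype.card_fin]; omega))).map
      fun T => (Finset.univ.filter fun i => y i = true) ∪ T

/-- The randomized-response selection mechanism `RR : {0,1}^n → [n]^k` with flip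
probability `1/(1+e^ε)`: flip each bit of `x` independently with probability
`1/(1+e^ε)`, then select as in `rrSelect`. -/
noncomputable def RR (n k : ℕ) (hk : k ≤ n) (ε : ℝ) (x : Fin n → Bool) :
    PMF (Finset (Fin n)) :=
  (pmfPi n (flipPMF ε)).bind fun f => rrSelect n k hk fun i => xor (x i) (f i)


lemma pmfPi_apply' {α : Type*} (n : ℕ) (μ : PMF α) (f : Fin n → α) :
    pmfPi n μ f = ∏ i, μ (f i) := by
  induction n with
  | zero =>
      have : f = fun i => i.elim0 := funext fun i => i.elim0
      simp [pmfPi, this]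
  | succ n ih =>
      rw [show pmfPi (n+1) μ = μ.bind fun b => (pmfPi n μ).bind fun g => PMF.pure (Fin.cons b g) from rfl,
        PMF.bind_apply]
      rw [tsum_eq_single (f 0)]
      · rw [PMF.bind_apply, tsum_eq_single (Fin.tail f)]
        · rw [PMF.pure_apply, if_pos (Fin.cons_self_tail f).symm, mul_one, ih,
            Fin.prod_univ_succ]
          rfl
        · intro g hg
          rw [PMF.pure_apply, if_neg, mul_zero]
          intro h
          exact hg (by rw [h, Fin.tail_cons])
      · intro b hb
        rw [PMF.bind_apply]
        rw [ENNReal.tsum_eq_zero.2, mul_zero]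
        intro g
        rw [PMF.pure_apply, if_neg, mul_zero]
        intro h
        exact hb (by rw [h, Fin.cons_zero])

noncomputable def fB (ε : ℝ) (b : Bool) : ℝ :=
  if b then 1/(1+Real.exp ε) else 1 - 1/(1+Real.exp ε)

lemma flip_toReal (ε : ℝ) (b : Bool) : ((flipPMF ε) b).toReal = fB ε b := by
  have hq0 : (0:ℝ) ≤ 1/(1+Real.exp ε) := by positivity
  have hq1 : Real.toNNReal (1 / (1 + Real.exp ε)) ≤ 1 := by
    rw [Real.toNNReal_le_one, div_le_one (by positivity)]
    nlinarith [Real.exp_pos ε]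
  cases b with
  | true =>
      rw [flipPMF, PMF.bernoulli_apply, Bool.cond_true, ENNReal.coe_toReal,
        Real.coe_toNNReal _ hq0]
      simp [fB]
  | false =>
      rw [flipPMF, PMF.bernoulli_apply, Bool.cond_false, ENNReal.coe_toReal,
        NNReal.coe_sub hq1, NNReal.coe_one, Real.coe_toNNReal _ hq0]
      simp [fB]

lemma pmfPi_toReal (ε : ℝ) (n : ℕ) (f : Fin n → Bool) :
    ((pmfPi n (flipPMF ε)) f).toReal = ∏ i, fB ε (f i) := by
  rw [pmfPi_apply', ENNReal.toReal_prod]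
  exact Finset.prod_congr rfl fun i _ => flip_toReal ε (f i)

lemma RR_toReal (n k : ℕ) (hk : k ≤ n) (ε : ℝ) (x : Fin n → Bool) (I : Finset (Fin n)) :
    ((RR n k hk ε x) I).toReal
      = ∑ f : Fin n → Bool, (∏ i, fB ε (f i)) *
          ((rrSelect n k hk fun i => xor (x i) (f i)) I).toReal := by
  rw [RR, PMF.bind_apply, tsum_fintype, ENNReal.toReal_sum]
  · exact Finset.sum_congr rfl fun f _ => by
      rw [ENNReal.toReal_mul, pmfPi_toReal]
  · intro f _
    exact ENNReal.mul_ne_top (PMF.apply_ne_top _ _) (PMF.apply_ne_top _ _)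

noncomputable def wB (p : ℝ) (b : Bool) : ℝ := if b then p else 1 - p

noncomputable def betaR (ε p : ℝ) : ℝ :=
  p * (1 - 1/(1+Real.exp ε)) + (1-p) * (1/(1+Real.exp ε))

noncomputable def mB (ε p : ℝ) (b : Bool) : ℝ := if b then betaR ε p else 1 - betaR ε p

lemma sum_x_coord (ε p : ℝ) (n : ℕ) (y : Fin n → Bool) (i : Fin n) (hy : y i = true) :
    ∑ x : Fin n → Bool,
        weight p x * (∏ j, fB ε (xor (x j) (y j))) * (if x i then (1:ℝ) else 0)
    = (p * (1 - 1/(1+Real.exp ε))) * ∏ j ∈ Finset.univ.erase i, mB ε p (y j) := by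
  have hsummand : ∀ x : Fin n → Bool,
      weight p x * (∏ j, fB ε (xor (x j) (y j))) * (if x i then (1:ℝ) else 0)
      = ∏ j, (wB p (x j) * fB ε (xor (x j) (y j)) *
          (if j = i then (if x j then (1:ℝ) else 0) else 1)) := by
    intro x
    rw [Finset.prod_mul_distrib, Finset.prod_mul_distrib]
    rw [Finset.prod_ite_eq' Finset.univ i (fun j => if x j then (1:ℝ) else 0)]
    simp [weight, wB]
  simp_rw [hsummand]
  rw [← Fintype.prod_sum
    (fun j (b : Bool) => wB p b * fB ε (xor b (y j)) *
      (if j = i then (if b then (1:ℝ) else 0) else 1))]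
  have hcoord : ∀ j : Fin n,
      (∑ b : Bool, wB p b * fB ε (xor b (y j)) *
        (if j = i then (if b then (1:ℝ) else 0) else 1))
      = if j = i then p * (1 - 1/(1+Real.exp ε)) else mB ε p (y j) := by
    intro j
    rw [Fintype.sum_bool]
    by_cases hj : j = i
    · subst hj
      simp [hy, wB, fB]
    · rw [if_neg hj, if_neg hj, if_neg hj]
      cases hyj : y j <;> simp [wB, fB, mB, betaR, hyj] <;> ring
  simp_rw [hcoord]
  rw [← Finset.mul_prod_erase Finset.univ _ (Finset.mem_univ i), if_pos rfl]
  congr 1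
  exact Finset.prod_congr rfl fun j hj => if_neg (Finset.ne_of_mem_erase hj)

lemma good_y (ε p : ℝ) (n k : ℕ) (hk : k ≤ n) (hk1 : 1 ≤ k)
    (hβ : 0 < betaR ε p) (y : Fin n → Bool)
    (hgood : k ≤ (Finset.univ.filter fun i => y i = true).card) :
    ∑ I : Finset (Fin n), ((rrSelect n k hk y) I).toReal *
      ((1/(k:ℝ)) * ∑ i ∈ I, ∑ x : Fin n → Bool,
        weight p x * (∏ j, fB ε (xor (x j) (y j))) * (if x i then (1:ℝ) else 0))
    = (p * (1 - 1/(1+Real.exp ε)) / betaR ε p) * ∏ j, mB ε p (y j) := by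
  set S := Finset.univ.filter fun i => y i = true with hS
  set s := S.powersetCard k with hs
  have hrr : rrSelect n k hk y = PMF.uniformOfFinset s (Finset.powersetCard_nonempty.2 hgood) := by
    rw [rrSelect, dif_pos hgood]
  have hsne : s.Nonempty := Finset.powersetCard_nonempty.2 hgood
  have hcard : (0:ℝ) < s.card := by exact_mod_cast Finset.card_pos.2 hsne
  have happly : ∀ I : Finset (Fin n),
      ((rrSelect n k hk y) I).toReal = if I ∈ s then ((s.card:ℝ))⁻¹ else 0 := by
    intro I
    rw [hrr, PMF.uniformOfFinset_apply]
    split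
    · rw [ENNReal.toReal_inv]; simp
    · simp
  have hval : ∀ I ∈ s,
      ((1/(k:ℝ)) * ∑ i ∈ I, ∑ x : Fin n → Bool,
        weight p x * (∏ j, fB ε (xor (x j) (y j))) * (if x i then (1:ℝ) else 0))
      = (p * (1 - 1/(1+Real.exp ε)) / betaR ε p) * ∏ j, mB ε p (y j) := by
    intro I hI
    rw [Finset.mem_powersetCard] at hI
    obtain ⟨hIS, hIcard⟩ := hI
    have hterm : ∀ i ∈ I, (∑ x : Fin n → Bool,
        weight p x * (∏ j, fB ε (xor (x j) (y j))) * (if x i then (1:ℝ) else 0))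
        = (p * (1 - 1/(1+Real.exp ε)) / betaR ε p) * ∏ j, mB ε p (y j) := by
      intro i hi
      have hyi : y i = true := by
        have := hIS hi
        rw [hS, Finset.mem_filter] at this
        exact this.2
      rw [sum_x_coord ε p n y i hyi]
      have hsplit : mB ε p (y i) * ∏ j ∈ Finset.univ.erase i, mB ε p (y j)
          = ∏ j, mB ε p (y j) := Finset.mul_prod_erase Finset.univ (fun j => mB ε p (y j)) (Finset.mem_univ i)
      have hmyi : mB ε p (y i) = betaR ε p := by rw [mB, hyi, if_pos rfl]
      have : ∏ j ∈ Finset.univ.erase i, mB ε p (y j)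
          = (betaR ε p)⁻¹ * ∏ j, mB ε p (y j) := by
        rw [← hsplit, hmyi, ← mul_assoc, inv_mul_cancel₀ hβ.ne', one_mul]
      rw [this]
      field_simp
    rw [Finset.sum_congr rfl hterm, Finset.sum_const, hIcard, nsmul_eq_mul]
    have hk0 : (k:ℝ) ≠ 0 := by positivity
    field_simp
  calc ∑ I : Finset (Fin n), ((rrSelect n k hk y) I).toReal *
      ((1/(k:ℝ)) * ∑ i ∈ I, ∑ x : Fin n → Bool,
        weight p x * (∏ j, fB ε (xor (x j) (y j))) * (if x i then (1:ℝ) else 0))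
      = ∑ I ∈ s, ((s.card:ℝ))⁻¹ *
        ((p * (1 - 1/(1+Real.exp ε)) / betaR ε p) * ∏ j, mB ε p (y j)) := by
        rw [← Finset.sum_subset (Finset.subset_univ s)]
        · exact Finset.sum_congr rfl fun I hI => by rw [happly, if_pos hI, hval I hI]
        · intro I _ hI
          rw [happly, if_neg hI, zero_mul]
    _ = (p * (1 - 1/(1+Real.exp ε)) / betaR ε p) * ∏ j, mB ε p (y j) := by
        rw [Finset.sum_const, nsmul_eq_mul, ← mul_assoc, mul_inv_cancel₀ hcard.ne', one_mul]

lemma sum_M_eq_one (ε p : ℝ) (n : ℕ) (h1 : mB ε p true + mB ε p false = 1) :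
    ∑ y : Fin n → Bool, ∏ j, mB ε p (y j) = 1 := by
  rw [← Fintype.prod_sum (fun (_ : Fin n) (b : Bool) => mB ε p b)]
  simp [Fintype.sum_bool, h1]

lemma M_formula (ε p : ℝ) (n : ℕ) (y : Fin n → Bool) :
    ∏ j, mB ε p (y j)
      = betaR ε p ^ (Finset.univ.filter fun i => y i = true).card *
        (1 - betaR ε p) ^ (n - (Finset.univ.filter fun i => y i = true).card) := by
  have hsplit := Finset.prod_filter_mul_prod_filter_not Finset.univ
    (fun i => y i = true) (fun i => mB ε p (y i))
  set t := (Finset.univ.filter fun i => y i = true).card with ht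
  have h1 : ∏ i ∈ Finset.univ.filter (fun i => y i = true), mB ε p (y i)
      = betaR ε p ^ t := by
    rw [Finset.prod_congr rfl (fun i hi => ?_), Finset.prod_const, ht]
    rw [mB, if_pos (Finset.mem_filter.1 hi).2]
  have hcard2 : (Finset.univ.filter fun i => ¬ y i = true).card = n - t := by
    have h := Finset.card_filter_add_card_filter_not
      (s := (Finset.univ : Finset (Fin n))) (p := fun i => y i = true)
    simp only [Finset.card_univ, Fintype.card_fin] at h
    omega
  have h2 : ∏ i ∈ Finset.univ.filter (fun i => ¬ y i = true), mB ε p (y i)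
      = (1 - betaR ε p) ^ (n - t) := by
    rw [Finset.prod_congr rfl (fun i hi => ?_), Finset.prod_const, hcard2]
    rw [mB, if_neg (Finset.mem_filter.1 hi).2]
  rw [← hsplit, h1, h2]

lemma bad_card (n k : ℕ) (hk1 : 1 ≤ k) (hkn : k ≤ n) :
    ((Finset.univ : Finset (Fin n → Bool)).filter
      fun y => (Finset.univ.filter fun i => y i = true).card < k).card ≤ k * n ^ k := by
  have hn1 : 1 ≤ n := le_trans hk1 hkn
  set T := ((Finset.univ : Finset (Finset (Fin n))).filter fun s => s.card < k) with hT
  have hinj : ((Finset.univ : Finset (Fin n → Bool)).filter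
      fun y => (Finset.univ.filter fun i => y i = true).card < k).card ≤ T.card := by
    apply Finset.card_le_card_of_injOn (fun y => Finset.univ.filter fun i => y i = true)
    · intro y hy
      rw [Finset.mem_coe, Finset.mem_filter] at hy ⊢
      exact ⟨Finset.mem_univ _, hy.2⟩
    · intro y _ y' _ h
      funext i
      have : (i ∈ Finset.univ.filter fun j => y j = true)
          ↔ (i ∈ Finset.univ.filter fun j => y' j = true) := by
        simp only at h; rw [h]
      simp only [Finset.mem_filter, Finset.mem_univ, true_and] at this
      cases hyi : y i <;> cases hyi' : y' i <;> simp_all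
  have hsub : T ⊆ (Finset.range k).biUnion fun t =>
      (Finset.univ : Finset (Fin n)).powersetCard t := by
    intro s hs
    rw [hT, Finset.mem_filter] at hs
    rw [Finset.mem_biUnion]
    exact ⟨s.card, Finset.mem_range.2 hs.2,
      Finset.mem_powersetCard.2 ⟨Finset.subset_univ s, rfl⟩⟩
  have hTcard : T.card ≤ ∑ t ∈ Finset.range k, n.choose t := by
    refine le_trans (Finset.card_le_card hsub) (le_trans (Finset.card_biUnion_le) ?_)
    apply Finset.sum_le_sum
    intro t _
    rw [Finset.card_powersetCard, Finset.card_univ, Fintype.card_fin]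
  have hchoose : ∑ t ∈ Finset.range k, n.choose t ≤ k * n ^ k := by
    calc ∑ t ∈ Finset.range k, n.choose t
        ≤ ∑ t ∈ Finset.range k, n ^ k := by
          apply Finset.sum_le_sum
          intro t ht
          exact le_trans (Nat.choose_le_pow n t)
            (Nat.pow_le_pow_right hn1 (le_of_lt (Finset.mem_range.1 ht)))
      _ = k * n ^ k := by rw [Finset.sum_const, Finset.card_range, smul_eq_mul]
  exact le_trans hinj (le_trans hTcard hchoose)

def xorEquiv (n : ℕ) (x : Fin n → Bool) : (Fin n → Bool) ≃ (Fin n → Bool) :=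
  Function.Involutive.toPerm (fun f i => xor (x i) (f i))
    (fun f => funext fun i => by simp)

lemma key_eq (ε p : ℝ) (n k : ℕ) (hkn : k ≤ n) :
    ∑ x : Fin n → Bool, weight p x *
        ∑ I : Finset (Fin n), ((RR n k hkn ε x) I).toReal *
          ((1 / (k:ℝ)) * ∑ i ∈ I, (if x i then (1:ℝ) else 0))
    = ∑ y : Fin n → Bool, ∑ I : Finset (Fin n),
        ((rrSelect n k hkn y) I).toReal *
          ((1/(k:ℝ)) * ∑ i ∈ I, ∑ x : Fin n → Bool,
            weight p x * (∏ j, fB ε (xor (x j) (y j))) * (if x i then (1:ℝ) else 0)) := by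
  have step1 : ∀ x : Fin n → Bool,
      (∑ I : Finset (Fin n), ((RR n k hkn ε x) I).toReal *
          ((1 / (k:ℝ)) * ∑ i ∈ I, (if x i then (1:ℝ) else 0)))
      = ∑ y : Fin n → Bool, ∑ I : Finset (Fin n),
          (∏ j, fB ε (xor (x j) (y j))) * (((rrSelect n k hkn y) I).toReal *
            ((1/(k:ℝ)) * ∑ i ∈ I, (if x i then (1:ℝ) else 0))) := by
    intro x
    simp_rw [RR_toReal n k hkn ε x, Finset.sum_mul]
    rw [Finset.sum_comm]
    refine Fintype.sum_equiv (xorEquiv n x) _ _ ?_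
    intro f
    have hy : (xorEquiv n x) f = fun i => xor (x i) (f i) := rfl
    have hxx : ∀ j, xor (x j) (xor (x j) (f j)) = f j := fun j => by
      cases x j <;> cases f j <;> simp
    simp_rw [hy, hxx]
    exact Finset.sum_congr rfl fun I _ => by ring
  calc ∑ x : Fin n → Bool, weight p x *
        ∑ I : Finset (Fin n), ((RR n k hkn ε x) I).toReal *
          ((1 / (k:ℝ)) * ∑ i ∈ I, (if x i then (1:ℝ) else 0))
      = ∑ x : Fin n → Bool, ∑ y : Fin n → Bool, ∑ I : Finset (Fin n),
          weight p x * ((∏ j, fB ε (xor (x j) (y j))) * (((rrSelect n k hkn y) I).toReal *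
            ((1/(k:ℝ)) * ∑ i ∈ I, (if x i then (1:ℝ) else 0)))) := by
        refine Finset.sum_congr rfl fun x _ => ?_
        rw [step1 x, Finset.mul_sum]
        exact Finset.sum_congr rfl fun y _ => by rw [Finset.mul_sum]
    _ = ∑ y : Fin n → Bool, ∑ I : Finset (Fin n), ∑ x : Fin n → Bool,
          weight p x * ((∏ j, fB ε (xor (x j) (y j))) * (((rrSelect n k hkn y) I).toReal *
            ((1/(k:ℝ)) * ∑ i ∈ I, (if x i then (1:ℝ) else 0)))) := by
        rw [Finset.sum_comm]
        exact Finset.sum_congr rfl fun y _ => Finset.sum_comm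
    _ = ∑ y : Fin n → Bool, ∑ I : Finset (Fin n),
        ((rrSelect n k hkn y) I).toReal *
          ((1/(k:ℝ)) * ∑ i ∈ I, ∑ x : Fin n → Bool,
            weight p x * (∏ j, fB ε (xor (x j) (y j))) * (if x i then (1:ℝ) else 0)) := by
        refine Finset.sum_congr rfl fun y _ => Finset.sum_congr rfl fun I _ => ?_
        simp_rw [Finset.mul_sum]
        rw [Finset.sum_comm]
        exact Finset.sum_congr rfl fun i _ => Finset.sum_congr rfl fun x _ => by ring

/-- For `X` drawn from the product Bernoulli(`p`) distribution on
`{0,1}^n` and `I = RR(X)` the randomized-response selection with flip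
probability `1/(1+e^ε)`, the expected fraction
`Z = (1/k)·∑_{j ∈ I} 1[X_j = 1]` (over `X` and the randomness of `RR`) satisfies
`E[Z] ≥ (1 − k·n^k·exp((k−n)·(1−p+p·e^ε)/(1+e^ε))) · p·e^ε/(1−p+p·e^ε)`. -/
theorem stmt8 (ε : ℝ) (hε : 0 ≤ ε) (p : ℝ) (hp0 : 0 < p) (hp1 : p < 1)
    (n k : ℕ) (hk1 : 1 ≤ k) (hkn : k ≤ n) :
    (1 - (k:ℝ) * (n:ℝ)^k *
        Real.exp (((k:ℝ) - (n:ℝ)) * (1 - p + p * Real.exp ε) / (1 + Real.exp ε)))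
      * (p * Real.exp ε / (1 - p + p * Real.exp ε))
    ≤ ∑ x : Fin n → Bool, weight p x *
        ∑ I : Finset (Fin n), ((RR n k hkn ε x) I).toReal *
          ((1 / (k:ℝ)) * ∑ i ∈ I, (if x i then (1:ℝ) else 0)) := by
  have hEx := Real.exp_pos ε
  have hE1 : (0:ℝ) < 1 + Real.exp ε := by positivity
  have hq0 : (0:ℝ) < 1/(1+Real.exp ε) := by positivity
  have hq1 : 1/(1+Real.exp ε) < 1 := by
    rw [div_lt_one hE1]; nlinarith
  have hβ0 : 0 < betaR ε p := by rw [betaR]; nlinarith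
  have hβ1 : betaR ε p < 1 := by rw [betaR]; nlinarith
  have hden : (0:ℝ) < 1 - p + p * Real.exp ε := by nlinarith
  have hβeq : betaR ε p = (1 - p + p * Real.exp ε) / (1 + Real.exp ε) := by
    rw [betaR]; field_simp; ring
  have hr : p * (1 - 1/(1+Real.exp ε)) / betaR ε p
      = p * Real.exp ε / (1 - p + p * Real.exp ε) := by
    rw [hβeq]; field_simp; ring
  have hrpos : (0:ℝ) ≤ p * Real.exp ε / (1 - p + p * Real.exp ε) := by positivity
  rw [key_eq ε p n k hkn]
  -- nonnegativity of each y-term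
  have hwnonneg : ∀ x : Fin n → Bool, 0 ≤ weight p x := by
    intro x
    refine Finset.prod_nonneg fun j _ => ?_
    split <;> nlinarith
  have hfBnonneg : ∀ b, 0 ≤ fB ε b := by
    intro b; rw [fB]; split <;> nlinarith
  have hGnonneg : ∀ y : Fin n → Bool,
      0 ≤ ∑ I : Finset (Fin n), ((rrSelect n k hkn y) I).toReal *
          ((1/(k:ℝ)) * ∑ i ∈ I, ∑ x : Fin n → Bool,
            weight p x * (∏ j, fB ε (xor (x j) (y j))) * (if x i then (1:ℝ) else 0)) := by
    intro y
    refine Finset.sum_nonneg fun I _ => mul_nonneg ENNReal.toReal_nonneg ?_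
    refine mul_nonneg (by positivity) ?_
    refine Finset.sum_nonneg fun i _ => Finset.sum_nonneg fun x _ => ?_
    refine mul_nonneg (mul_nonneg (hwnonneg x) ?_) (by split <;> norm_num)
    exact Finset.prod_nonneg fun j _ => hfBnonneg _
  set good := ((Finset.univ : Finset (Fin n → Bool)).filter
    fun y => k ≤ (Finset.univ.filter fun i => y i = true).card) with hgoodDef
  have hsubset : ∑ y ∈ good, (∑ I : Finset (Fin n), ((rrSelect n k hkn y) I).toReal *
          ((1/(k:ℝ)) * ∑ i ∈ I, ∑ x : Fin n → Bool,
            weight p x * (∏ j, fB ε (xor (x j) (y j))) * (if x i then (1:ℝ) else 0)))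
      ≤ ∑ y : Fin n → Bool, (∑ I : Finset (Fin n), ((rrSelect n k hkn y) I).toReal *
          ((1/(k:ℝ)) * ∑ i ∈ I, ∑ x : Fin n → Bool,
            weight p x * (∏ j, fB ε (xor (x j) (y j))) * (if x i then (1:ℝ) else 0))) :=
    Finset.sum_le_sum_of_subset_of_nonneg (Finset.subset_univ good)
      (fun y _ _ => hGnonneg y)
  refine le_trans ?_ hsubset
  have hgoodval : ∑ y ∈ good, (∑ I : Finset (Fin n), ((rrSelect n k hkn y) I).toReal *
          ((1/(k:ℝ)) * ∑ i ∈ I, ∑ x : Fin n → Bool,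
            weight p x * (∏ j, fB ε (xor (x j) (y j))) * (if x i then (1:ℝ) else 0)))
      = (p * Real.exp ε / (1 - p + p * Real.exp ε)) *
          ∑ y ∈ good, ∏ j, mB ε p (y j) := by
    rw [Finset.mul_sum]
    refine Finset.sum_congr rfl fun y hy => ?_
    rw [hgoodDef, Finset.mem_filter] at hy
    rw [good_y ε p n k hkn hk1 hβ0 y hy.2, hr]
  rw [hgoodval, mul_comm]
  refine mul_le_mul_of_nonneg_left ?_ hrpos
  -- 1 - bound ≤ ∑_{y ∈ good} M y
  have hsplitM : ∑ y ∈ good, (∏ j, mB ε p (y j))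
      = 1 - ∑ y ∈ ((Finset.univ : Finset (Fin n → Bool)).filter
          fun y => ¬ k ≤ (Finset.univ.filter fun i => y i = true).card),
            ∏ j, mB ε p (y j) := by
    have h := Finset.sum_filter_add_sum_filter_not (Finset.univ : Finset (Fin n → Bool))
      (fun y => k ≤ (Finset.univ.filter fun i => y i = true).card)
      (fun y => ∏ j, mB ε p (y j))
    have hone : ∑ y : Fin n → Bool, ∏ j, mB ε p (y j) = 1 :=
      sum_M_eq_one ε p n (by simp [mB])
    rw [hone] at h
    rw [hgoodDef]
    linarith
  rw [hsplitM]
  have hbadsum : ∑ y ∈ ((Finset.univ : Finset (Fin n → Bool)).filter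
          fun y => ¬ k ≤ (Finset.univ.filter fun i => y i = true).card),
            (∏ j, mB ε p (y j))
      ≤ (k:ℝ) * (n:ℝ)^k *
        Real.exp (((k:ℝ) - (n:ℝ)) * (1 - p + p * Real.exp ε) / (1 + Real.exp ε)) := by
    have hMle : ∀ y ∈ ((Finset.univ : Finset (Fin n → Bool)).filter
          fun y => ¬ k ≤ (Finset.univ.filter fun i => y i = true).card),
        (∏ j, mB ε p (y j)) ≤ (1 - betaR ε p)^(n - k) := by
      intro y hy
      rw [Finset.mem_filter, not_le] at hy
      rw [M_formula]
      calc betaR ε p ^ (Finset.univ.filter fun i => y i = true).card *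
            (1 - betaR ε p) ^ (n - (Finset.univ.filter fun i => y i = true).card)
          ≤ 1 * (1 - betaR ε p) ^ (n - k) := by
            refine mul_le_mul (pow_le_one₀ hβ0.le hβ1.le) ?_ (pow_nonneg (by linarith) _) zero_le_one
            exact pow_le_pow_of_le_one (by linarith) (by linarith) (by omega)
        _ = (1 - betaR ε p) ^ (n - k) := one_mul _
    calc ∑ y ∈ ((Finset.univ : Finset (Fin n → Bool)).filter
          fun y => ¬ k ≤ (Finset.univ.filter fun i => y i = true).card),
            (∏ j, mB ε p (y j))
        ≤ ∑ y ∈ ((Finset.univ : Finset (Fin n → Bool)).filter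
          fun y => ¬ k ≤ (Finset.univ.filter fun i => y i = true).card),
            (1 - betaR ε p)^(n - k) := Finset.sum_le_sum hMle
      _ = (((Finset.univ : Finset (Fin n → Bool)).filter
          fun y => ¬ k ≤ (Finset.univ.filter fun i => y i = true).card).card : ℝ) *
            (1 - betaR ε p)^(n - k) := by
          rw [Finset.sum_const, nsmul_eq_mul]
      _ ≤ ((k * n^k : ℕ) : ℝ) * (1 - betaR ε p)^(n - k) := by
          refine mul_le_mul_of_nonneg_right ?_ (pow_nonneg (by linarith) _)
          have hb := bad_card n k hk1 hkn
          have : ((Finset.univ : Finset (Fin n → Bool)).filter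
              fun y => ¬ k ≤ (Finset.univ.filter fun i => y i = true).card)
              = ((Finset.univ : Finset (Fin n → Bool)).filter
              fun y => (Finset.univ.filter fun i => y i = true).card < k) := by
            apply Finset.filter_congr
            intro y _
            simp [not_le]
          rw [this]
          exact_mod_cast hb
      _ ≤ ((k * n^k : ℕ) : ℝ) * Real.exp (-(betaR ε p))^(n - k) := by
          refine mul_le_mul_of_nonneg_left ?_ (by positivity)
          refine pow_le_pow_left₀ (by linarith) ?_ _
          linarith [Real.add_one_le_exp (-(betaR ε p))]
      _ = (k:ℝ) * (n:ℝ)^k *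
            Real.exp (((k:ℝ) - (n:ℝ)) * (1 - p + p * Real.exp ε) / (1 + Real.exp ε)) := by
          rw [← Real.exp_nat_mul]
          push_cast [Nat.cast_sub hkn]
          congr 1
          rw [hβeq] at *
          field_simp
          ring
  linarith
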